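/- If α = (√5 − 1)/2 (the golden ratio conjugate), then liminf over positive integers q of q·‖qα‖ equals 1/√5. -/

import Mathlib

/-- Distance from a real number to the nearest integer. -/
noncomputable def distNearestInt (t : ℝ) : ℝ := ⨅ n : ℤ, |t - n|

open Filter Real

lemma gr_dist_eq_of_le {t : ℝ} {m : ℤ} (h : |t - m| ≤ 1/2) :
    distNearestInt t = |t - m| := by
  apply le_antisymm
  · exact ciInf_le ⟨0, by rintro x ⟨n, rfl⟩; exact abs_nonneg _⟩ m
  · apply le_ciInf
    intro n
    rcases eq_or_ne n m with rfl | hne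
    · exact le_rfl
    · have h1 : (1:ℝ) ≤ |(m:ℝ) - n| := by
        have : (1:ℤ) ≤ |m - n| := Int.one_le_abs (sub_ne_zero.2 (Ne.symm hne))
        exact_mod_cast this
    -- |t - n| ≥ |m - n| - |t - m| ≥ 1 - 1/2 ≥ |t - m|
      have h2 : |(m:ℝ) - n| ≤ |t - m| + |t - n| := by
        have := abs_sub_abs_le_abs_sub ((m:ℝ) - n) (t - n)
        calc |(m:ℝ) - n| ≤ |(m:ℝ) - n - (t - n)| + |t - n| := by
              have := abs_sub ((m:ℝ) - n) (t - n)
              calc |(m:ℝ) - n| = |((m:ℝ) - n - (t - n)) + (t - n)| := by ring_nf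
                _ ≤ |(m:ℝ) - n - (t - n)| + |t - n| := abs_add_le _ _
          _ = |t - m| + |t - n| := by rw [show (m:ℝ) - n - (t - n) = -(t - m) by ring, abs_neg]
      linarith

lemma gr_dist_eq_round (t : ℝ) : distNearestInt t = |t - round t| :=
  gr_dist_eq_of_le (abs_sub_round t)

lemma gr_dist_nonneg (t : ℝ) : 0 ≤ distNearestInt t := by
  rw [gr_dist_eq_round]; exact abs_nonneg _

lemma gr_sqrt5_sq : Real.sqrt 5 ^ 2 = 5 := Real.sq_sqrt (by norm_num)

lemma gr_sqrt5_gt_two : 2 < Real.sqrt 5 := by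
  nlinarith [gr_sqrt5_sq, Real.sqrt_nonneg 5]

lemma gr_sqrt5_lt_three : Real.sqrt 5 < 3 := by
  nlinarith [gr_sqrt5_sq, Real.sqrt_nonneg 5]

/-- Key Fibonacci identity. -/
lemma gr_fib_id (k : ℕ) :
    (Nat.fib (k+1) : ℝ) * ((Real.sqrt 5 - 1) / 2) - Nat.fib k
      = (-1)^k * ((Real.sqrt 5 - 1) / 2)^(k+1) := by
  induction k with
  | zero => simp
  | succ k ih =>
      rw [Nat.fib_add_two]
      push_cast
      linear_combination (-(Real.sqrt 5 - 1)/2) * ih + ((Nat.fib (k+1) : ℝ)/4) * gr_sqrt5_sq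

lemma gr_alpha_pos : 0 < (Real.sqrt 5 - 1) / 2 := by
  have := gr_sqrt5_gt_two; linarith

lemma gr_alpha_lt_one : (Real.sqrt 5 - 1) / 2 < 1 := by
  have := gr_sqrt5_lt_three; linarith

/-- Along Fibonacci numbers the value of the subsequence. -/
lemma gr_fib_dist (n : ℕ) :
    distNearestInt ((Nat.fib (n+2) : ℝ) * ((Real.sqrt 5 - 1) / 2))
      = ((Real.sqrt 5 - 1) / 2) ^ (n+2) := by
  set a : ℝ := (Real.sqrt 5 - 1) / 2 with ha
  have h0 : 0 < a := gr_alpha_pos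
  have h1 : a < 1 := gr_alpha_lt_one
  have hsq : a ^ 2 ≤ 1/2 := by
    have := gr_sqrt5_gt_two
    have h5 := gr_sqrt5_sq
    rw [ha]; nlinarith
  have hle : a ^ (n+2) ≤ 1/2 :=
    le_trans (pow_le_pow_of_le_one h0.le h1.le (by omega)) hsq
  have hid := gr_fib_id (n+1)
  have habs : |(Nat.fib (n+2) : ℝ) * a - (Nat.fib (n+1) : ℝ)| = a ^ (n+2) := by
    rw [hid]
    rw [abs_mul, abs_pow, abs_neg, abs_one, one_pow, one_mul, abs_of_nonneg (pow_nonneg h0.le _)]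
  rw [gr_dist_eq_of_le (m := Nat.fib (n+1)) (by rw [Int.cast_natCast, habs]; exact hle)]
  rw [Int.cast_natCast, habs]

lemma gr_tendsto_fib :
    Tendsto (fun n : ℕ => (Nat.fib n : ℝ) * ((Real.sqrt 5 - 1) / 2)^n)
      atTop (nhds (1 / Real.sqrt 5)) := by
  set a : ℝ := (Real.sqrt 5 - 1) / 2 with ha
  have hs5 : (0:ℝ) < Real.sqrt 5 := by have := gr_sqrt5_gt_two; linarith
  have key : ∀ n : ℕ, (Nat.fib n : ℝ) * a ^ n = (1 - (-(a^2))^n) / Real.sqrt 5 := by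
    intro n
    rw [Real.coe_fib_eq]
    have hpa : goldenRatio * a = 1 := by
      rw [ha]; unfold goldenRatio; linear_combination (1/4) * gr_sqrt5_sq
    have hca : goldenConj * a = -(a^2) := by
      rw [ha]; unfold goldenConj; ring
    rw [div_mul_eq_mul_div, sub_mul, ← mul_pow, ← mul_pow, hpa, hca, one_pow]
  simp only [key]
  have habs : |(-(a^2))| < 1 := by
    rw [abs_neg, abs_of_nonneg (sq_nonneg a)]
    nlinarith [gr_alpha_pos, gr_alpha_lt_one]
  have := tendsto_pow_atTop_nhds_zero_of_abs_lt_one habs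
  have h2 := (tendsto_const_nhds (x := (1:ℝ)) (f := atTop (α := ℕ))).sub this
  have h3 := h2.div_const (Real.sqrt 5)
  simpa using h3

lemma gr_lower (q : ℕ) (hq : 1 ≤ q) :
    1 / Real.sqrt 5 - 1 / (q:ℝ) ≤ (q:ℝ) * distNearestInt ((q:ℝ) * ((Real.sqrt 5 - 1) / 2)) := by
  set a : ℝ := (Real.sqrt 5 - 1) / 2 with ha
  set t : ℝ := (q:ℝ) * a with ht
  set p : ℤ := round t with hp
  set d : ℝ := |t - p| with hd
  have hdist : distNearestInt t = d := gr_dist_eq_round t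
  have hd0 : 0 ≤ d := abs_nonneg _
  have hdhalf : d ≤ 1/2 := abs_sub_round t
  have hs5 : (0:ℝ) < Real.sqrt 5 := by have := gr_sqrt5_gt_two; linarith
  have hq0 : (0:ℝ) < (q:ℝ) := by exact_mod_cast hq
  -- the integer p² + pq - q² is nonzero
  have hm0 : (p^2 + p*(q:ℤ) - (q:ℤ)^2 : ℤ) ≠ 0 := by
    intro h
    have h2 : ((2*p + q)^2 : ℤ) = 5 * (q:ℤ)^2 := by linear_combination 4*h
    have hirr : Irrational (Real.sqrt 5) := by
      simpa using (Nat.Prime.irrational_sqrt (show Nat.Prime 5 by norm_num))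
    have hR : ((2*p + (q:ℤ) : ℤ) : ℝ)^2 = 5 * ((q:ℝ))^2 := by exact_mod_cast congrArg (Int.cast : ℤ → ℝ) h2
    set r : ℚ := ((2*p + (q:ℤ) : ℤ) : ℚ) / ((q:ℤ) : ℚ) with hr
    have hqQ : ((q:ℤ) : ℚ) ≠ 0 := by
      have : (q:ℤ) ≠ 0 := by exact_mod_cast Nat.one_le_iff_ne_zero.mp hq
      exact_mod_cast this
    have hrR : ((r : ℚ) : ℝ) = ((2*p + (q:ℤ) : ℤ) : ℝ) / ((q:ℝ)) := by
      rw [hr]; push_cast; ring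
    have hr2 : ((r : ℚ) : ℝ)^2 = 5 := by
      rw [hrR, div_pow, hR]
      field_simp
    have hfac : (Real.sqrt 5 - ((r:ℚ):ℝ)) * (Real.sqrt 5 + ((r:ℚ):ℝ)) = 0 := by
      have := gr_sqrt5_sq
      nlinarith [hr2]
    rcases mul_eq_zero.mp hfac with h | h
    · exact hirr ⟨r, by linarith⟩
    · exact hirr ⟨-r, by push_cast; linarith⟩
  -- real identity
  have hid : (t - (p:ℝ)) * (t - (p:ℝ) - (q:ℝ) * Real.sqrt 5)
      = (p:ℝ)^2 + (p:ℝ)*(q:ℝ) - (q:ℝ)^2 := by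
    rw [ht, ha]
    linear_combination (-(q:ℝ)^2/4) * gr_sqrt5_sq
  have habs1 : (1:ℝ) ≤ |(p:ℝ)^2 + (p:ℝ)*(q:ℝ) - (q:ℝ)^2| := by
    have h1 : (1:ℤ) ≤ |p^2 + p*(q:ℤ) - (q:ℤ)^2| := Int.one_le_abs hm0
    have : ((1:ℤ):ℝ) ≤ (|p^2 + p*(q:ℤ) - (q:ℤ)^2| : ℤ) := by exact_mod_cast h1
    calc (1:ℝ) ≤ ((|p^2 + p*(q:ℤ) - (q:ℤ)^2| : ℤ) : ℝ) := by exact_mod_cast h1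
      _ = |((p^2 + p*(q:ℤ) - (q:ℤ)^2 : ℤ) : ℝ)| := by rw [Int.cast_abs]
      _ = |(p:ℝ)^2 + (p:ℝ)*(q:ℝ) - (q:ℝ)^2| := by push_cast; ring_nf
  have hkey : (1:ℝ) ≤ d * (d + (q:ℝ) * Real.sqrt 5) := by
    have hB : |t - (p:ℝ) - (q:ℝ) * Real.sqrt 5| ≤ d + (q:ℝ) * Real.sqrt 5 := by
      calc |t - (p:ℝ) - (q:ℝ) * Real.sqrt 5| ≤ |t - (p:ℝ)| + |(q:ℝ) * Real.sqrt 5| := abs_sub _ _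
        _ = d + (q:ℝ) * Real.sqrt 5 := by
            rw [abs_of_nonneg (by positivity : (0:ℝ) ≤ (q:ℝ) * Real.sqrt 5)]
    calc (1:ℝ) ≤ |(p:ℝ)^2 + (p:ℝ)*(q:ℝ) - (q:ℝ)^2| := habs1
      _ = |t - (p:ℝ)| * |t - (p:ℝ) - (q:ℝ) * Real.sqrt 5| := by rw [← abs_mul, hid]
      _ ≤ d * (d + (q:ℝ) * Real.sqrt 5) := mul_le_mul_of_nonneg_left hB hd0
  rw [hdist]
  by_cases hcase : d * (q:ℝ) ≤ 1
  · -- main case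
    have hgoal : (q:ℝ) - Real.sqrt 5 ≤ ((q:ℝ) * d) * (Real.sqrt 5 * (q:ℝ)) := by
      have hkq : (q:ℝ) ≤ d * (d + (q:ℝ) * Real.sqrt 5) * (q:ℝ) := by
        nlinarith [hkey, hq0]
      nlinarith [hkq, hcase, hd0, hdhalf, gr_sqrt5_gt_two, hq0,
        mul_nonneg hd0 (sub_nonneg.2 hcase)]
    rw [div_sub_div _ _ (ne_of_gt hs5) (ne_of_gt hq0), div_le_iff₀ (by positivity)]
    calc (1:ℝ) * (q:ℝ) - Real.sqrt 5 * 1 = (q:ℝ) - Real.sqrt 5 := by ring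
      _ ≤ ((q:ℝ) * d) * (Real.sqrt 5 * (q:ℝ)) := hgoal
  · push_neg at hcase
    have h1 : 1 / Real.sqrt 5 ≤ 1 := by
      rw [div_le_one hs5]; linarith [gr_sqrt5_gt_two]
    have h2 : (0:ℝ) ≤ 1 / (q:ℝ) := by positivity
    have : (1:ℝ) < (q:ℝ) * d := by linarith [mul_comm d (q:ℝ)] 
    nlinarith

theorem golden_ratio_liminf :
    Filter.liminf
      (fun q : ℕ => (q : ℝ) * distNearestInt (q * ((Real.sqrt 5 - 1) / 2)))
      Filter.atTop = 1 / Real.sqrt 5 := by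
  set u : ℕ → ℝ := fun q : ℕ => (q : ℝ) * distNearestInt (q * ((Real.sqrt 5 - 1) / 2)) with hu
  set g : ℕ → ℕ := fun n => Nat.fib (n+2) with hg
  have hu0 : ∀ q, 0 ≤ u q := fun q => mul_nonneg (Nat.cast_nonneg q) (gr_dist_nonneg _)
  -- value along Fibonacci subsequence
  have hval : ∀ n : ℕ, u (g n) = (Nat.fib (n+2) : ℝ) * ((Real.sqrt 5 - 1) / 2) ^ (n+2) := by
    intro n
    simp only [hu, hg]
    rw [gr_fib_dist n]
  -- tendsto of the subsequence
  have htendsub : Tendsto (fun n => u (g n)) atTop (nhds (1 / Real.sqrt 5)) := by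
    have := gr_tendsto_fib.comp (tendsto_add_atTop_nat 2)
    simp only [Function.comp_def] at this
    simpa only [hval] using this
  have hgtend : Tendsto g atTop atTop := by
    apply tendsto_atTop_mono (f := id) _ tendsto_id
    intro n
    have h1 : n + 1 ≤ Nat.fib (n+1) + 1 := Nat.le_fib_add_one (n+1)
    have h2 : Nat.fib (n+1) ≤ Nat.fib (n+2) := Nat.fib_le_fib_succ
    simp only [hg, id]
    omega
  have hfreq : ∃ᶠ q in atTop, u q ≤ 1 := by
    apply hgtend.frequently
    apply Eventually.frequently
    have hlt : 1 / Real.sqrt 5 < 1 := by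
      rw [div_lt_one (by have := gr_sqrt5_gt_two; linarith)]
      linarith [gr_sqrt5_gt_two]
    filter_upwards [htendsub.eventually_le_const (by linarith : 1 / Real.sqrt 5 < 1)] with n hn
    exact hn
  have hcobdd : atTop.IsCoboundedUnder (· ≥ ·) u :=
    Filter.IsCoboundedUnder.of_frequently_le hfreq
  apply le_antisymm
  · -- upper bound via Fibonacci subsequence
    have hmaple : Filter.map g atTop ≤ atTop := hgtend
    have hcob2 : (Filter.map g atTop).IsCoboundedUnder (· ≥ ·) u := by
      apply Filter.IsCoboundedUnder.of_frequently_le (a := 1)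
      rw [Filter.frequently_map]
      apply Eventually.frequently
      filter_upwards [htendsub.eventually_le_const
        (by rw [div_lt_one (by have := gr_sqrt5_gt_two; linarith)]; linarith [gr_sqrt5_gt_two]
          : 1 / Real.sqrt 5 < 1)] with n hn
      exact hn
    have hstep : Filter.liminf u atTop ≤ Filter.liminf u (Filter.map g atTop) :=
      Filter.liminf_le_liminf_of_le hmaple (Filter.isBoundedUnder_of ⟨0, hu0⟩) hcob2
    have heq : Filter.liminf u (Filter.map g atTop) = Filter.liminf (fun n => u (g n)) atTop := by
      rw [Filter.liminf, Filter.liminf, Filter.map_map]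
      rfl
    rw [heq, htendsub.liminf_eq] at hstep
    exact hstep
  · -- lower bound
    have htendlow : Tendsto (fun q : ℕ => 1 / Real.sqrt 5 - 1 / (q:ℝ)) atTop
        (nhds (1 / Real.sqrt 5)) := by
      have := (tendsto_const_nhds (x := 1 / Real.sqrt 5) (f := atTop (α := ℕ))).sub
        tendsto_one_div_atTop_nhds_zero_nat
      simpa using this
    have hstep : Filter.liminf (fun q : ℕ => 1 / Real.sqrt 5 - 1 / (q:ℝ)) atTop
        ≤ Filter.liminf u atTop := by
      have hbdd : atTop.IsBoundedUnder (· ≥ ·) (fun q : ℕ => 1 / Real.sqrt 5 - 1 / (q:ℝ)) := by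
        refine Filter.isBoundedUnder_of ⟨1 / Real.sqrt 5 - 1, fun q => ?_⟩
        have : (1:ℝ) / (q:ℝ) ≤ 1 := by
          rcases Nat.eq_zero_or_pos q with h | h
          · simp [h]
          · rw [div_le_one (by exact_mod_cast h)]
            exact_mod_cast h
        simp only [ge_iff_le]
        linarith
      refine Filter.liminf_le_liminf ?_ hbdd hcobdd
      filter_upwards [Filter.eventually_ge_atTop 1] with q hq
      exact gr_lower q hq
    rwa [htendlow.liminf_eq] at hstep
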